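/- Let G be a finite group of order at least 2, let λ ≥ 1 be an integer, and suppose (A, B) and (A, B′) are both near-factorizations of index λ of G. Then B = B′. -/

import Mathlib

open Finset

/-- `(A, B)` is a near-factorization of index `λ` of the finite group `G`: for every `g ∈ G`,
the number of pairs `(a, b) ∈ A × B` with `a * b = g` equals `λ` if `g ≠ e` and `0` if `g = e`. -/
def IsNearFactorizationIndex {G : Type*} [Group G] [Fintype G] [DecidableEq G]
    (lam : ℕ) (A B : Finset G) : Prop :=
  ∀ g : G, ((A ×ˢ B).filter (fun p => p.1 * p.2 = g)).card = if g = 1 then 0 else lam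

noncomputable def ind {G : Type*} [Group G] [Fintype G] [DecidableEq G] (S : Finset G) :
    MonoidAlgebra ℚ G := ∑ s ∈ S, MonoidAlgebra.single s 1

lemma ind_apply {G : Type*} [Group G] [Fintype G] [DecidableEq G] (S : Finset G) (g : G) :
    (ind S).coeff g = if g ∈ S then 1 else 0 := by
  classical
  rw [ind, MonoidAlgebra.coeff_sum, Finset.sum_apply']
  simp [MonoidAlgebra.coeff_single, Finsupp.single_apply, Finset.sum_ite_eq]

lemma ind_mul_ind {G : Type*} [Group G] [Fintype G] [DecidableEq G] (A B : Finset G) (g : G) :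
    (ind A * ind B).coeff g = ((A ×ˢ B).filter (fun p => p.1 * p.2 = g)).card := by
  classical
  rw [ind, ind, Finset.sum_mul_sum]
  simp only [MonoidAlgebra.single_mul_single, mul_one]
  rw [← Finset.sum_product']
  rw [MonoidAlgebra.coeff_sum, Finset.sum_apply']
  simp only [MonoidAlgebra.coeff_single, Finsupp.single_apply]
  rw [Finset.card_filter, Nat.cast_sum]
  simp

lemma ind_mul_univ {G : Type*} [Group G] [Fintype G] [DecidableEq G] (A : Finset G) :
    ind A * ind (univ : Finset G) = (A.card : ℚ) • ind (univ : Finset G) := by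
  classical
  ext g
  rw [ind_mul_ind, MonoidAlgebra.coeff_smul_apply, ind_apply]
  simp only [mem_univ, if_true, smul_eq_mul, mul_one]
  congr 1
  apply Finset.card_bij' (fun p _ => p.1) (fun a _ => (a, a⁻¹ * g)) <;>
    simp +contextual [Finset.mem_filter, Finset.mem_product, eq_comm, mul_assoc]

theorem mate_unique_index_lambda {G : Type*} [Group G] [Fintype G] [DecidableEq G]
    (hG : 2 ≤ Fintype.card G) (lam : ℕ) (hlam : 1 ≤ lam) (A B B' : Finset G)
    (h : IsNearFactorizationIndex lam A B) (h' : IsNearFactorizationIndex lam A B') :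
    B = B' := by
  classical
  have : Nontrivial G := Fintype.one_lt_card_iff_nontrivial.mp hG
  obtain ⟨g0, hg0⟩ := exists_ne (1 : G)
  -- A is nonempty
  have hA : A.Nonempty := by
    have := h g0
    rw [if_neg hg0] at this
    have hpos : 0 < ((A ×ˢ B).filter (fun p => p.1 * p.2 = g0)).card := this ▸ hlam
    obtain ⟨p, hp⟩ := Finset.card_pos.mp hpos
    exact ⟨p.1, (Finset.mem_product.mp (Finset.mem_filter.mp hp).1).1⟩
  have hAcard : (A.card : ℚ) ≠ 0 := by
    exact_mod_cast Finset.card_ne_zero_of_mem hA.choose_spec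
  have hlam0 : (lam : ℚ) ≠ 0 := by exact_mod_cast Nat.one_le_iff_ne_zero.mp hlam
  -- key identity
  have key : ∀ C : Finset G, IsNearFactorizationIndex lam A C →
      ind A * ind C = (lam : ℚ) • ind (univ : Finset G) - (lam : ℚ) • 1 := by
    intro C hC
    ext g
    rw [ind_mul_ind, hC g, MonoidAlgebra.coeff_sub, Finsupp.sub_apply, MonoidAlgebra.coeff_smul_apply, MonoidAlgebra.coeff_smul_apply,
      ind_apply, MonoidAlgebra.one_def, MonoidAlgebra.coeff_single, Finsupp.single_apply]
    by_cases hg : g = 1 <;> simp [hg, eq_comm]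
  have eq1 := key B h
  have eq1' := key B' h'
  -- right inverse of ind A
  set C : MonoidAlgebra ℚ G :=
    (A.card : ℚ)⁻¹ • ind (univ : Finset G) - (lam : ℚ)⁻¹ • ind B with hC
  have hAC : ind A * C = 1 := by
    rw [hC, mul_sub, mul_smul_comm, mul_smul_comm, ind_mul_univ, eq1, smul_smul,
      inv_mul_cancel₀ hAcard, one_smul, smul_sub, smul_smul, smul_smul,
      inv_mul_cancel₀ hlam0, one_smul, one_smul]
    abel
  -- left multiplication by ind A is injective
  have hsurj : Function.Surjective (LinearMap.mulLeft ℚ (ind A)) := by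
    intro y
    exact ⟨C * y, by rw [LinearMap.mulLeft_apply, ← mul_assoc, hAC, one_mul]⟩
  have hfd : FiniteDimensional ℚ (MonoidAlgebra ℚ G) :=
    inferInstance
  have hinj : Function.Injective (LinearMap.mulLeft ℚ (ind A)) :=
    LinearMap.injective_iff_surjective.mpr hsurj
  have hBB : ind B = ind B' := hinj (by simp [LinearMap.mulLeft_apply, eq1, eq1'])
  ext g
  have h2 : (ind B).coeff g = (ind B').coeff g := by rw [hBB]
  rw [ind_apply, ind_apply] at h2
  by_cases hgB : g ∈ B <;> by_cases hgB' : g ∈ B' <;> simp [hgB, hgB'] at h2 ⊢
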